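/- Let Ω be a finite probability space, P a probability measure with full support, and Y_x, Y_{x'} : Ω → ℕ. Then the following are equivalent: (1) Y_x(ω) ≥ Y_{x'}(ω) for all ω ∈ Ω; (2) for all h < l, P(Y_x = h ∧ Y_{x'} = l) = 0; (3) for every event E with P(E) > 0 and every y, P(Y_x ≥ y ∣ E) ≥ P(Y_{x'} ≥ y ∣ E). -/

import Mathlib

open scoped Classical in
/-- Probability of an event `A` under a (finitely supported) measure given by weights `P`. -/
noncomputable def Pr {Ω : Type*} [Fintype Ω] (P : Ω → ℝ) (A : Set Ω) : ℝ :=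
  ∑ ω, if ω ∈ A then P ω else 0

open scoped Classical in
lemma Pr_mono {Ω : Type*} [Fintype Ω] (P : Ω → ℝ) (hP : ∀ ω, 0 ≤ P ω)
    {A B : Set Ω} (h : A ⊆ B) : Pr P A ≤ Pr P B := by
  apply Finset.sum_le_sum
  intro ω _
  by_cases hA : ω ∈ A
  · simp [hA, h hA]
  · simp only [hA, if_false]
    by_cases hB : ω ∈ B <;> simp [hB, hP ω]

open scoped Classical in
lemma Pr_term_le {Ω : Type*} [Fintype Ω] (P : Ω → ℝ) (hP : ∀ ω, 0 ≤ P ω)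
    {A : Set Ω} {ω : Ω} (h : ω ∈ A) : P ω ≤ Pr P A := by
  have := Finset.single_le_sum (f := fun ω => if ω ∈ A then P ω else 0)
    (fun i _ => by by_cases hi : i ∈ A <;> simp [hi, hP i]) (Finset.mem_univ ω)
  simpa [h, Pr] using this

theorem stmt_13 {Ω : Type*} [Fintype Ω] (P : Ω → ℝ)
    (hP : ∀ ω, 0 ≤ P ω) (hPsum : ∑ ω, P ω = 1)
    (hfull : ∀ ω, 0 < P ω) (Yx Yx' : Ω → ℕ) :
    ((∀ ω, Yx' ω ≤ Yx ω) ↔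
        (∀ h l : ℕ, h < l → Pr P {ω | Yx ω = h ∧ Yx' ω = l} = 0)) ∧
      ((∀ ω, Yx' ω ≤ Yx ω) ↔
        (∀ (E : Set Ω) (y : ℕ), Pr P E > 0 →
          Pr P ({ω | y ≤ Yx ω} ∩ E) / Pr P E ≥
            Pr P ({ω | y ≤ Yx' ω} ∩ E) / Pr P E)) := by
  classical
  constructor
  · constructor
    · intro hmono h l hhl
      have : {ω | Yx ω = h ∧ Yx' ω = l} = (∅ : Set Ω) := by
        ext ω
        simp only [Set.mem_setOf_eq, Set.mem_empty_iff_false, iff_false]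
        rintro ⟨h1, h2⟩
        have := hmono ω
        omega
      simp [Pr, this]
    · intro h2 ω
      by_contra hc
      push_neg at hc
      have hzero := h2 (Yx ω) (Yx' ω) hc
      have hmem : ω ∈ {ω' | Yx ω' = Yx ω ∧ Yx' ω' = Yx' ω} := ⟨rfl, rfl⟩
      have := Pr_term_le P hP hmem
      have := hfull ω
      linarith
  · constructor
    · intro hmono E y hE
      apply div_le_div_of_nonneg_right _ hE.le
      apply Pr_mono P hP
      intro ω ⟨h1, h2⟩
      exact ⟨le_trans h1 (hmono ω), h2⟩
    · intro h3 ω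
      by_contra hc
      push_neg at hc
      have hE : Pr P ({ω} : Set Ω) > 0 := by
        have := Pr_term_le P hP (A := ({ω} : Set Ω)) (ω := ω) rfl
        linarith [hfull ω]
      have := h3 {ω} (Yx' ω) hE
      have h1 : Pr P ({ω' | Yx' ω ≤ Yx' ω'} ∩ {ω}) = P ω := by
        have : ({ω' | Yx' ω ≤ Yx' ω'} ∩ {ω} : Set Ω) = {ω} := by
          ext a
          simp only [Set.mem_inter_iff, Set.mem_setOf_eq, Set.mem_singleton_iff,
            and_iff_right_iff_imp]
          rintro rfl; exact le_refl _
        rw [this]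
        simp only [Pr, Set.mem_singleton_iff]
        rw [Finset.sum_ite_eq' Finset.univ ω P]
        simp
      have h2 : Pr P ({ω' | Yx' ω ≤ Yx ω'} ∩ {ω}) = 0 := by
        have : ({ω' | Yx' ω ≤ Yx ω'} ∩ {ω} : Set Ω) = ∅ := by
          ext a
          simp only [Set.mem_inter_iff, Set.mem_setOf_eq, Set.mem_singleton_iff,
            Set.mem_empty_iff_false, iff_false, not_and]
          rintro h rfl; omega
        simp [Pr, this]
      rw [h1, h2] at this
      have := hfull ω
      have hEne : Pr P ({ω} : Set Ω) ≠ 0 := ne_of_gt hE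
      rw [ge_iff_le, div_le_div_iff₀ hE hE] at *
      nlinarith
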